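/- Let L, M, Z be nonempty finite sets, F a two-universal family of hash functions from L to M with |f⁻¹(m)| = |L|/|M| for all f ∈ F and m ∈ M, Q : L → (Z → ℝ>0) a strictly positive conditional probability kernel, and let the random variable L be uniform on L and Z be generated from L via Q. Then for all 0 < s ≤ 1/2: I(F(L); Z | F) ≤ (|M|^s / (|L|^s · s)) · exp(φ̄(s, Q)), where φ̄(s, Q) = ln Σ_{z∈Z} ( (1/|L|) Σ_{ℓ∈L} Q(z|ℓ)^{1/(1-s)} )^{1-s}, F is uniform on F, and I(F(L); Z | F) = E_F I(f(L); Z) is the conditional mutual information. -/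

import Mathlib

open Finset

private lemma log_le_rpow_div {x s : ℝ} (hx : 0 < x) (hs : 0 < s) :
    Real.log x ≤ (x ^ s - 1) / s := by
  rw [le_div_iff₀ hs]
  have h1 : Real.log (x ^ s) ≤ x ^ s - 1 :=
    Real.log_le_sub_one_of_pos (Real.rpow_pos_of_pos hx s)
  rwa [Real.log_rpow hx, mul_comm s] at h1

private lemma rpow_subadd {a b s : ℝ} (ha : 0 ≤ a) (hb : 0 ≤ b) (hs0 : 0 ≤ s) (hs1 : s ≤ 1) :
    (a + b) ^ s ≤ a ^ s + b ^ s := by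
  lift a to NNReal using ha
  lift b to NNReal using hb
  have := NNReal.rpow_add_le_add_rpow a b hs0 hs1
  exact_mod_cast this

private lemma jensen_avg {α : Type*} (Fs : Finset α) (hFs : Fs.Nonempty) (B : α → ℝ)
    (hB : ∀ f ∈ Fs, 0 ≤ B f) {s : ℝ} (hs0 : 0 < s) (hs1 : s ≤ 1) :
    (1 / Fs.card : ℝ) * ∑ f ∈ Fs, B f ^ s ≤ ((1 / Fs.card : ℝ) * ∑ f ∈ Fs, B f) ^ s := by
  have hc : (0:ℝ) < Fs.card := by exact_mod_cast Finset.card_pos.mpr hFs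
  have hp : 1 ≤ 1 / s := by rw [le_div_iff₀ hs0]; linarith
  have key := Real.arith_mean_le_rpow_mean Fs (fun _ => (1 / Fs.card : ℝ))
    (fun f => B f ^ s) (fun _ _ => by positivity)
    (by rw [Finset.sum_const, nsmul_eq_mul]; field_simp)
    (fun f _ => Real.rpow_nonneg (hB f ‹_›) s) hp
  rw [one_div_one_div] at key
  calc (1 / Fs.card : ℝ) * ∑ f ∈ Fs, B f ^ s
      = ∑ f ∈ Fs, (1 / Fs.card : ℝ) * B f ^ s := by rw [Finset.mul_sum]
    _ ≤ (∑ f ∈ Fs, (1 / Fs.card : ℝ) * (B f ^ s) ^ (1 / s)) ^ s := key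
    _ = ((1 / Fs.card : ℝ) * ∑ f ∈ Fs, B f) ^ s := by
        congr 1
        rw [Finset.mul_sum]
        refine Finset.sum_congr rfl fun f hf => ?_
        rw [← Real.rpow_mul (hB f hf), mul_one_div_cancel hs0.ne', Real.rpow_one]

private lemma hoelder_step {ι : Type*} [Fintype ι] {w : ℝ} (hw : 0 < w) (g : ι → ℝ)
    (hg : ∀ i, 0 ≤ g i) {s : ℝ} (hs0 : 0 < s) (hs1 : s < 1) :
    ∑ i, w * (g i * g i ^ s) ≤
      (∑ i, w * g i) ^ s * (∑ i, w * g i ^ ((1:ℝ) / (1 - s))) ^ (1 - s) := by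
  have h1s : (0:ℝ) < 1 - s := by linarith
  have hpq : Real.HolderConjugate (1 / s) (1 / (1 - s)) := by
    rw [Real.holderConjugate_iff]
    constructor
    · rw [lt_div_iff₀ hs0]; linarith
    · rw [one_div, one_div, inv_inv, inv_inv]; ring
  have key := Real.inner_le_Lp_mul_Lq_of_nonneg Finset.univ hpq
    (f := fun i => (w * g i) ^ s) (g := fun i => (w * g i ^ ((1:ℝ)/(1-s))) ^ (1 - s))
    (fun i _ => Real.rpow_nonneg (mul_nonneg hw.le (hg i)) s)
    (fun i _ => Real.rpow_nonneg (mul_nonneg hw.le (Real.rpow_nonneg (hg i) _)) (1 - s))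
  rw [one_div_one_div, one_div_one_div] at key
  have e1 : ∀ i : ι, (w * g i) ^ s * (w * g i ^ ((1:ℝ)/(1-s))) ^ (1 - s)
      = w * (g i * g i ^ s) := by
    intro i
    rw [Real.mul_rpow hw.le (hg i), Real.mul_rpow hw.le (Real.rpow_nonneg (hg i) _),
      ← Real.rpow_mul (hg i), one_div_mul_cancel h1s.ne', Real.rpow_one]
    rw [show w ^ s * g i ^ s * (w ^ (1 - s) * g i) = (w ^ s * w ^ (1-s)) * (g i * g i ^ s) by ring,
      ← Real.rpow_add hw, add_sub_cancel, Real.rpow_one]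
  have e2 : ∀ i : ι, ((w * g i) ^ s) ^ ((1:ℝ) / s) = w * g i := by
    intro i
    rw [← Real.rpow_mul (mul_nonneg hw.le (hg i)), mul_one_div_cancel hs0.ne', Real.rpow_one]
  have e3 : ∀ i : ι, ((w * g i ^ ((1:ℝ)/(1-s))) ^ (1 - s)) ^ ((1:ℝ) / (1 - s)) =
      w * g i ^ ((1:ℝ)/(1-s)) := by
    intro i
    rw [← Real.rpow_mul (mul_nonneg hw.le (Real.rpow_nonneg (hg i) _)), mul_one_div_cancel h1s.ne',
      Real.rpow_one]
  calc ∑ i, w * (g i * g i ^ s)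
      = ∑ i, (w * g i) ^ s * (w * g i ^ ((1:ℝ)/(1-s))) ^ (1 - s) := by
        exact Finset.sum_congr rfl fun i _ => (e1 i).symm
    _ ≤ (∑ i, ((w * g i) ^ s) ^ ((1:ℝ)/s)) ^ s *
        (∑ i, ((w * g i ^ ((1:ℝ)/(1-s))) ^ (1 - s)) ^ ((1:ℝ)/(1-s))) ^ (1 - s) := key
    _ = (∑ i, w * g i) ^ s * (∑ i, w * g i ^ ((1:ℝ) / (1 - s))) ^ (1 - s) := by
        rw [Finset.sum_congr rfl fun i _ => e2 i, Finset.sum_congr rfl fun i _ => e3 i]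

/-- Theorem 1 (new privacy amplification theorem): the conditional mutual
information E_F I(F(L); Z) is bounded by (|M|^s/(|L|^s s)) exp(φ̄(s,Q)). -/
theorem privacy_amplification_gallager
    {L M Z : Type*} [Fintype L] [Fintype M] [Fintype Z]
    [Nonempty L] [Nonempty M] [Nonempty Z] [DecidableEq L] [DecidableEq M]
    (F : Finset (L → M)) (hF : F.Nonempty)
    (huniv : ∀ x₁ x₂ : L, x₁ ≠ x₂ →
      ((F.filter (fun f => f x₁ = f x₂)).card : ℝ) / F.card ≤ 1 / Fintype.card M)
    (hreg : ∀ f ∈ F, ∀ m : M,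
      (univ.filter (fun ℓ : L => f ℓ = m)).card * Fintype.card M = Fintype.card L)
    (Q : L → Z → ℝ) (hQpos : ∀ ℓ z, 0 < Q ℓ z) (hQsum : ∀ ℓ, ∑ z : Z, Q ℓ z = 1)
    (QZ : Z → ℝ) (hQZ : ∀ z, QZ z = (1 / Fintype.card L : ℝ) * ∑ ℓ : L, Q ℓ z)
    -- joint distribution of (f(L), Z) for a fixed hash function f
    (joint : (L → M) → M → Z → ℝ)
    (hjoint : ∀ f m z, joint f m z =
      (1 / Fintype.card L : ℝ) * ∑ ℓ ∈ univ.filter (fun ℓ : L => f ℓ = m), Q ℓ z)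
    -- mutual information I(f(L); Z) for a fixed hash function f
    (MI : (L → M) → ℝ)
    (hMI : ∀ f, MI f = ∑ m : M, ∑ z : Z,
      joint f m z * Real.log (joint f m z / ((1 / Fintype.card M : ℝ) * QZ z)))
    (s : ℝ) (hs0 : 0 < s) (hs1 : s ≤ 1 / 2) :
    (1 / F.card : ℝ) * ∑ f ∈ F, MI f ≤
      (Fintype.card M : ℝ) ^ s / ((Fintype.card L : ℝ) ^ s * s) *
        Real.exp (Real.log (∑ z : Z,
          ((1 / Fintype.card L : ℝ) *
              ∑ ℓ : L, Q ℓ z ^ ((1 : ℝ) / (1 - s))) ^ (1 - s))) := by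
  classical
  set nL : ℝ := (Fintype.card L : ℝ) with hnLdef
  set nM : ℝ := (Fintype.card M : ℝ) with hnMdef
  have hnL : (0:ℝ) < nL := by rw [hnLdef]; exact_mod_cast Fintype.card_pos
  have hnM : (0:ℝ) < nM := by rw [hnMdef]; exact_mod_cast Fintype.card_pos
  have hFc : (0:ℝ) < F.card := by exact_mod_cast Finset.card_pos.mpr hF
  have hs1' : s < 1 := lt_of_le_of_lt hs1 (by norm_num)
  have hA : ∀ (ℓ : L) (z : Z), 0 < (1/nL) * Q ℓ z :=
    fun ℓ z => mul_pos (by positivity) (hQpos ℓ z)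
  have hQZpos : ∀ z, 0 < QZ z := fun z => by
    rw [hQZ]
    exact mul_pos (by positivity) (Finset.sum_pos (fun ℓ _ => hQpos ℓ z) univ_nonempty)
  have hQZsum : ∑ z : Z, QZ z = 1 := by
    simp_rw [hQZ]
    rw [← Finset.mul_sum, Finset.sum_comm]
    simp_rw [hQsum]
    rw [Finset.sum_const, nsmul_eq_mul, mul_one, Finset.card_univ]
    rw [hnLdef] at hnL ⊢
    field_simp
  have hjoint' : ∀ f m z, joint f m z =
      ∑ ℓ ∈ univ.filter (fun ℓ : L => f ℓ = m), (1/nL) * Q ℓ z := by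
    intro f m z; rw [hjoint, Finset.mul_sum]
  have hjnn : ∀ f m z, 0 ≤ joint f m z := by
    intro f m z; rw [hjoint']
    exact Finset.sum_nonneg fun ℓ _ => (hA ℓ z).le
  -- total probability is 1
  have hTot : ∀ f : L → M, ∑ m : M, ∑ z : Z, joint f m z = 1 := by
    intro f
    have h1 : ∀ m : M, ∑ z : Z, joint f m z =
        (1/nL) * ((univ.filter (fun ℓ : L => f ℓ = m)).card : ℝ) := by
      intro m
      calc ∑ z : Z, joint f m z
          = ∑ z : Z, ∑ ℓ ∈ univ.filter (fun ℓ : L => f ℓ = m), (1/nL) * Q ℓ z := by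
            exact Finset.sum_congr rfl fun z _ => hjoint' f m z
        _ = ∑ ℓ ∈ univ.filter (fun ℓ : L => f ℓ = m), (1/nL) * ∑ z : Z, Q ℓ z := by
            rw [Finset.sum_comm]
            exact Finset.sum_congr rfl fun ℓ _ => (Finset.mul_sum _ _ _).symm
        _ = _ := by
            simp [hQsum, Finset.sum_const, nsmul_eq_mul, mul_comm]
    rw [Finset.sum_congr rfl fun m _ => h1 m, ← Finset.mul_sum]
    have h2 : ∑ m : M, ((univ.filter (fun ℓ : L => f ℓ = m)).card : ℝ) = nL := by
      have h3 : ∑ m : M, ∑ ℓ ∈ univ.filter (fun ℓ : L => f ℓ = m), (1:ℝ)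
          = ∑ ℓ : L, (1:ℝ) := Finset.sum_fiberwise _ _ _
      simpa [Finset.sum_const, Finset.card_univ] using h3
    rw [h2]; field_simp
  -- Step 1: per-f bound via log x ≤ (x^s - 1)/s
  have step1 : ∀ f ∈ F, MI f ≤
      (1/s) * ((∑ z : Z, ∑ m : M, (nM / QZ z) ^ s * (joint f m z * joint f m z ^ s)) - 1) := by
    intro f hf
    rw [hMI]
    have hle : ∀ m z, joint f m z * Real.log (joint f m z / ((1/nM) * QZ z)) ≤
        (1/s) * ((nM / QZ z) ^ s * (joint f m z * joint f m z ^ s) - joint f m z) := by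
      intro m z
      have hq := hQZpos z
      have harg : joint f m z / ((1/nM) * QZ z) = joint f m z * (nM / QZ z) := by
        field_simp
      rcases (hjnn f m z).eq_or_lt with h0 | h0
      · simp [← h0, Real.log_zero]
      · rw [harg]
        have hr : 0 < joint f m z * (nM / QZ z) := mul_pos h0 (by positivity)
        calc joint f m z * Real.log (joint f m z * (nM / QZ z))
            ≤ joint f m z * (((joint f m z * (nM / QZ z)) ^ s - 1) / s) :=
              mul_le_mul_of_nonneg_left (log_le_rpow_div hr hs0) h0.le
          _ = (1/s) * ((nM / QZ z) ^ s * (joint f m z * joint f m z ^ s) - joint f m z) := by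
              rw [Real.mul_rpow h0.le (by positivity : (0:ℝ) ≤ nM / QZ z)]
              ring
    calc ∑ m : M, ∑ z : Z, joint f m z * Real.log (joint f m z / ((1/nM) * QZ z))
        ≤ ∑ m : M, ∑ z : Z,
            (1/s) * ((nM / QZ z) ^ s * (joint f m z * joint f m z ^ s) - joint f m z) :=
          Finset.sum_le_sum fun m _ => Finset.sum_le_sum fun z _ => hle m z
      _ = (1/s) * ((∑ z : Z, ∑ m : M, (nM / QZ z) ^ s * (joint f m z * joint f m z ^ s)) - 1) := by
          simp_rw [← Finset.mul_sum]
          congr 1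
          calc ∑ m : M, ∑ z : Z,
                ((nM / QZ z) ^ s * (joint f m z * joint f m z ^ s) - joint f m z)
              = (∑ m : M, ∑ z : Z, (nM / QZ z) ^ s * (joint f m z * joint f m z ^ s))
                - ∑ m : M, ∑ z : Z, joint f m z := by simp_rw [Finset.sum_sub_distrib]
            _ = (∑ z : Z, ∑ m : M, (nM / QZ z) ^ s * (joint f m z * joint f m z ^ s)) - 1 := by
                rw [hTot f, Finset.sum_comm]
            _ = _ := by simp_rw [Finset.mul_sum]
  -- Step 2: averaged fiber bound via two-universality and Jensen
  have step2 : ∀ z : Z, (1/(F.card:ℝ)) * ∑ f ∈ F, ∑ m : M, joint f m z * joint f m z ^ s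
      ≤ (∑ ℓ : L, ((1/nL) * Q ℓ z) * ((1/nL) * Q ℓ z) ^ s) + QZ z * (QZ z / nM) ^ s := by
    intro z
    set B : (L → M) → L → ℝ := fun f ℓ =>
      ∑ ℓ' ∈ univ.erase ℓ, if f ℓ' = f ℓ then (1/nL) * Q ℓ' z else 0 with hBdef
    have hBnn : ∀ f ℓ, 0 ≤ B f ℓ := by
      intro f ℓ
      refine Finset.sum_nonneg fun ℓ' _ => ?_
      by_cases h : f ℓ' = f ℓ
      · simpa [h] using (hA ℓ' z).le
      · simp [h]
    have h2a : ∀ f ∈ F, ∑ m : M, joint f m z * joint f m z ^ s ≤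
        ∑ ℓ : L, ((1/nL) * Q ℓ z) * (((1/nL) * Q ℓ z) ^ s + B f ℓ ^ s) := by
      intro f hf
      have hfib : ∀ m : M, joint f m z * joint f m z ^ s ≤
          ∑ ℓ ∈ univ.filter (fun ℓ : L => f ℓ = m),
            ((1/nL) * Q ℓ z) * (((1/nL) * Q ℓ z) ^ s + B f ℓ ^ s) := by
        intro m
        rw [hjoint' f m z, Finset.sum_mul]
        refine Finset.sum_le_sum fun ℓ hℓ => ?_
        have hflm : f ℓ = m := by simpa using (Finset.mem_filter.mp hℓ).2
        refine mul_le_mul_of_nonneg_left ?_ (hA ℓ z).le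
        have hsplit : ∑ ℓ' ∈ univ.filter (fun ℓ' : L => f ℓ' = m), (1/nL) * Q ℓ' z
            = (1/nL) * Q ℓ z + B f ℓ := by
          rw [← Finset.add_sum_erase _ _ hℓ]
          congr 1
          simp only [hBdef]
          rw [← Finset.sum_filter]
          congr 1
          ext ℓ'
          simp [Finset.mem_erase, Finset.mem_filter, hflm, and_comm]
        rw [hsplit]
        exact rpow_subadd (hA ℓ z).le (hBnn f ℓ) hs0.le hs1'.le
      calc ∑ m : M, joint f m z * joint f m z ^ s
          ≤ ∑ m : M, ∑ ℓ ∈ univ.filter (fun ℓ : L => f ℓ = m),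
              ((1/nL) * Q ℓ z) * (((1/nL) * Q ℓ z) ^ s + B f ℓ ^ s) :=
            Finset.sum_le_sum fun m _ => hfib m
        _ = _ := Finset.sum_fiberwise _ _ _
    have h2c : ∀ ℓ : L, (1/(F.card:ℝ)) * ∑ f ∈ F, B f ℓ ^ s ≤ (QZ z / nM) ^ s := by
      intro ℓ
      have hJ := jensen_avg F hF (fun f => B f ℓ) (fun f _ => hBnn f ℓ) hs0 hs1'.le
      refine hJ.trans (Real.rpow_le_rpow
        (mul_nonneg (by positivity) (Finset.sum_nonneg fun f _ => hBnn f ℓ)) ?_ hs0.le)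
      have e : ∑ f ∈ F, B f ℓ = ∑ ℓ' ∈ univ.erase ℓ,
          ((F.filter (fun f => f ℓ' = f ℓ)).card : ℝ) * ((1/nL) * Q ℓ' z) := by
        simp only [hBdef]
        rw [Finset.sum_comm]
        refine Finset.sum_congr rfl fun ℓ' _ => ?_
        rw [← Finset.sum_filter, Finset.sum_const, nsmul_eq_mul]
      rw [e, Finset.mul_sum]
      calc ∑ ℓ' ∈ univ.erase ℓ, (1/(F.card:ℝ)) *
              (((F.filter (fun f => f ℓ' = f ℓ)).card : ℝ) * ((1/nL) * Q ℓ' z))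
          ≤ ∑ ℓ' ∈ univ.erase ℓ, (1/nM) * ((1/nL) * Q ℓ' z) := by
            refine Finset.sum_le_sum fun ℓ' hℓ' => ?_
            have hne : ℓ' ≠ ℓ := (Finset.mem_erase.mp hℓ').1
            have hu := huniv ℓ' ℓ hne
            calc (1/(F.card:ℝ)) *
                  (((F.filter (fun f => f ℓ' = f ℓ)).card : ℝ) * ((1/nL) * Q ℓ' z))
                = (((F.filter (fun f => f ℓ' = f ℓ)).card : ℝ) / F.card) * ((1/nL) * Q ℓ' z) := by
                  ring
              _ ≤ (1/nM) * ((1/nL) * Q ℓ' z) :=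
                  mul_le_mul_of_nonneg_right hu (hA ℓ' z).le
        _ ≤ ∑ ℓ' : L, (1/nM) * ((1/nL) * Q ℓ' z) :=
            Finset.sum_le_sum_of_subset_of_nonneg (Finset.erase_subset _ _)
              (fun ℓ' _ _ => mul_nonneg (by positivity) (hA ℓ' z).le)
        _ = QZ z / nM := by
            rw [← Finset.mul_sum, ← Finset.mul_sum, ← hQZ z]
            ring
    have h2b : (1/(F.card:ℝ)) * ∑ f ∈ F, ∑ m : M, joint f m z * joint f m z ^ s
        ≤ (∑ ℓ : L, ((1/nL) * Q ℓ z) * ((1/nL) * Q ℓ z) ^ s)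
          + ∑ ℓ : L, ((1/nL) * Q ℓ z) * ((1/(F.card:ℝ)) * ∑ f ∈ F, B f ℓ ^ s) := by
      calc (1/(F.card:ℝ)) * ∑ f ∈ F, ∑ m : M, joint f m z * joint f m z ^ s
          ≤ (1/(F.card:ℝ)) * ∑ f ∈ F,
              ∑ ℓ : L, ((1/nL) * Q ℓ z) * (((1/nL) * Q ℓ z) ^ s + B f ℓ ^ s) :=
            mul_le_mul_of_nonneg_left (Finset.sum_le_sum h2a) (by positivity)
        _ = _ := by
            have e1 : ∑ f ∈ F, ∑ ℓ : L, ((1/nL) * Q ℓ z) * (((1/nL) * Q ℓ z) ^ s + B f ℓ ^ s)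
                = (F.card : ℝ) * (∑ ℓ : L, ((1/nL) * Q ℓ z) * ((1/nL) * Q ℓ z) ^ s)
                  + ∑ ℓ : L, ((1/nL) * Q ℓ z) * ∑ f ∈ F, B f ℓ ^ s := by
              simp_rw [mul_add, Finset.sum_add_distrib]
              congr 1
              · rw [Finset.sum_const, nsmul_eq_mul]
              · rw [Finset.sum_comm]
                exact Finset.sum_congr rfl fun ℓ _ => (Finset.mul_sum _ _ _).symm
            rw [e1, mul_add]
            congr 1
            · rw [← mul_assoc, one_div, inv_mul_cancel₀ hFc.ne', one_mul]
            · rw [Finset.mul_sum]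
              exact Finset.sum_congr rfl fun ℓ _ => by ring
    refine h2b.trans (add_le_add_right ?_ _)
    calc ∑ ℓ : L, ((1/nL) * Q ℓ z) * ((1/(F.card:ℝ)) * ∑ f ∈ F, B f ℓ ^ s)
        ≤ ∑ ℓ : L, ((1/nL) * Q ℓ z) * (QZ z / nM) ^ s :=
          Finset.sum_le_sum fun ℓ _ => mul_le_mul_of_nonneg_left (h2c ℓ) (hA ℓ z).le
      _ = QZ z * (QZ z / nM) ^ s := by
          rw [← Finset.sum_mul, ← Finset.mul_sum, ← hQZ z]
  -- Step 3: Hölder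
  have step3 : ∀ z : Z, ∑ ℓ : L, ((1/nL) * Q ℓ z) * ((1/nL) * Q ℓ z) ^ s
      ≤ (1/nL) ^ s * (QZ z ^ s *
        ((1/nL) * ∑ ℓ : L, Q ℓ z ^ ((1:ℝ)/(1-s))) ^ (1-s)) := by
    intro z
    have hH := hoelder_step (w := 1/nL) (by positivity) (fun ℓ => Q ℓ z)
      (fun ℓ => (hQpos ℓ z).le) hs0 hs1'
    calc ∑ ℓ : L, ((1/nL) * Q ℓ z) * ((1/nL) * Q ℓ z) ^ s
        = (1/nL) ^ s * ∑ ℓ : L, (1/nL) * (Q ℓ z * Q ℓ z ^ s) := by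
          rw [Finset.mul_sum]
          refine Finset.sum_congr rfl fun ℓ _ => ?_
          rw [Real.mul_rpow (by positivity : (0:ℝ) ≤ 1/nL) (hQpos ℓ z).le]
          ring
      _ ≤ (1/nL) ^ s * ((∑ ℓ : L, (1/nL) * Q ℓ z) ^ s *
            (∑ ℓ : L, (1/nL) * Q ℓ z ^ ((1:ℝ)/(1-s))) ^ (1-s)) :=
          mul_le_mul_of_nonneg_left hH (Real.rpow_nonneg (by positivity) s)
      _ = _ := by
          rw [← Finset.mul_sum, ← Finset.mul_sum, ← hQZ z]
  -- positivity of the Gallager sum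
  have hKz : ∀ z : Z, 0 < ((1/nL) * ∑ ℓ : L, Q ℓ z ^ ((1:ℝ)/(1-s))) ^ (1-s) := by
    intro z
    refine Real.rpow_pos_of_pos (mul_pos (by positivity) ?_) _
    exact Finset.sum_pos (fun ℓ _ => Real.rpow_pos_of_pos (hQpos ℓ z) _) univ_nonempty
  have hKpos : 0 < ∑ z : Z, ((1/nL) * ∑ ℓ : L, Q ℓ z ^ ((1:ℝ)/(1-s))) ^ (1-s) :=
    Finset.sum_pos (fun z _ => hKz z) univ_nonempty
  rw [Real.exp_log hKpos]
  set K : ℝ := ∑ z : Z, ((1/nL) * ∑ ℓ : L, Q ℓ z ^ ((1:ℝ)/(1-s))) ^ (1-s) with hKdef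
  -- per-z combination
  have perz : ∀ z : Z,
      (nM / QZ z) ^ s * ((1/(F.card:ℝ)) * ∑ f ∈ F, ∑ m : M, joint f m z * joint f m z ^ s)
      ≤ nM ^ s * (1/nL) ^ s * ((1/nL) * ∑ ℓ : L, Q ℓ z ^ ((1:ℝ)/(1-s))) ^ (1-s) + QZ z := by
    intro z
    have hq := hQZpos z
    have hcz : (0:ℝ) ≤ (nM / QZ z) ^ s := Real.rpow_nonneg (by positivity) s
    calc (nM / QZ z) ^ s * ((1/(F.card:ℝ)) * ∑ f ∈ F, ∑ m : M, joint f m z * joint f m z ^ s)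
        ≤ (nM / QZ z) ^ s * ((∑ ℓ : L, ((1/nL) * Q ℓ z) * ((1/nL) * Q ℓ z) ^ s)
            + QZ z * (QZ z / nM) ^ s) :=
          mul_le_mul_of_nonneg_left (step2 z) hcz
      _ ≤ (nM / QZ z) ^ s * ((1/nL) ^ s * (QZ z ^ s *
            ((1/nL) * ∑ ℓ : L, Q ℓ z ^ ((1:ℝ)/(1-s))) ^ (1-s)))
          + (nM / QZ z) ^ s * (QZ z * (QZ z / nM) ^ s) := by
          rw [mul_add]
          exact add_le_add_left (mul_le_mul_of_nonneg_left (step3 z) hcz) _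
      _ = nM ^ s * (1/nL) ^ s * ((1/nL) * ∑ ℓ : L, Q ℓ z ^ ((1:ℝ)/(1-s))) ^ (1-s) + QZ z := by
          congr 1
          · rw [show (nM / QZ z) ^ s * ((1/nL) ^ s * (QZ z ^ s *
                ((1/nL) * ∑ ℓ : L, Q ℓ z ^ ((1:ℝ)/(1-s))) ^ (1-s)))
              = ((nM / QZ z) ^ s * QZ z ^ s) * ((1/nL) ^ s *
                ((1/nL) * ∑ ℓ : L, Q ℓ z ^ ((1:ℝ)/(1-s))) ^ (1-s)) by ring,
              ← Real.mul_rpow (by positivity) hq.le, div_mul_cancel₀ _ hq.ne']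
            ring
          · rw [show (nM / QZ z) ^ s * (QZ z * (QZ z / nM) ^ s)
              = QZ z * ((nM / QZ z) ^ s * (QZ z / nM) ^ s) by ring,
              ← Real.mul_rpow (by positivity) (by positivity),
              show (nM / QZ z) * (QZ z / nM) = 1 by field_simp,
              Real.one_rpow, mul_one]
  -- assemble
  have hswap : (1/(F.card:ℝ)) * ∑ f ∈ F,
      (∑ z : Z, ∑ m : M, (nM / QZ z) ^ s * (joint f m z * joint f m z ^ s))
      = ∑ z : Z, (nM / QZ z) ^ s *
          ((1/(F.card:ℝ)) * ∑ f ∈ F, ∑ m : M, joint f m z * joint f m z ^ s) := by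
    rw [Finset.sum_comm, Finset.mul_sum]
    refine Finset.sum_congr rfl fun z _ => ?_
    simp_rw [← Finset.mul_sum]
    ring
  have avg : (1/(F.card:ℝ)) * ∑ f ∈ F,
      (∑ z : Z, ∑ m : M, (nM / QZ z) ^ s * (joint f m z * joint f m z ^ s))
      ≤ nM ^ s * (1/nL) ^ s * K + 1 := by
    rw [hswap]
    calc ∑ z : Z, (nM / QZ z) ^ s *
            ((1/(F.card:ℝ)) * ∑ f ∈ F, ∑ m : M, joint f m z * joint f m z ^ s)
        ≤ ∑ z : Z, (nM ^ s * (1/nL) ^ s *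
            ((1/nL) * ∑ ℓ : L, Q ℓ z ^ ((1:ℝ)/(1-s))) ^ (1-s) + QZ z) :=
          Finset.sum_le_sum fun z _ => perz z
      _ = nM ^ s * (1/nL) ^ s * K + 1 := by
          rw [Finset.sum_add_distrib, hQZsum, hKdef, ← Finset.mul_sum]
  calc (1 / F.card : ℝ) * ∑ f ∈ F, MI f
      ≤ (1/(F.card:ℝ)) * ∑ f ∈ F, (1/s) *
          ((∑ z : Z, ∑ m : M, (nM / QZ z) ^ s * (joint f m z * joint f m z ^ s)) - 1) :=
        mul_le_mul_of_nonneg_left (Finset.sum_le_sum step1) (by positivity)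
    _ = (1/s) * ((1/(F.card:ℝ)) * ∑ f ∈ F,
          (∑ z : Z, ∑ m : M, (nM / QZ z) ^ s * (joint f m z * joint f m z ^ s)) - 1) := by
        have halg : ∀ S : ℝ, (1/(F.card:ℝ)) * ((1/s) * (S - F.card))
            = (1/s) * ((1/(F.card:ℝ)) * S - 1) := by
          intro S
          rw [show (1/(F.card:ℝ)) * ((1/s) * (S - F.card))
              = (1/s) * ((1/(F.card:ℝ)) * S - (1/(F.card:ℝ)) * F.card) by ring,
            one_div_mul_cancel hFc.ne']
        rw [← Finset.mul_sum, Finset.sum_sub_distrib, Finset.sum_const, nsmul_eq_mul, mul_one,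
          halg]
    _ ≤ (1/s) * (nM ^ s * (1/nL) ^ s * K + 1 - 1) := by
        refine mul_le_mul_of_nonneg_left ?_ (by positivity)
        have := avg
        linarith
    _ = nM ^ s / (nL ^ s * s) * K := by
        rw [add_sub_cancel_right]
        rw [Real.div_rpow zero_le_one hnL.le, Real.one_rpow]
        have hnLs : (0:ℝ) < nL ^ s := Real.rpow_pos_of_pos hnL s
        field_simp
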